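/- Let F be a non-trivial increasing family of subsets of a finite set X and k a positive integer. Then q_c(F_k) = q_c(F)/k, where q_c is the expectation threshold and F_k the k-cloned family. -/
import Mathlib


open Finset

variable {α : Type*}

/-- Probability that a `p`-random subset of a finite type `α` lies in the family `F`. -/
noncomputable def probMem [Fintype α] [DecidableEq α] (p : ℝ) (F : Finset (Finset α)) : ℝ :=
  ∑ A ∈ F, p ^ A.card * (1 - p) ^ (Fintype.card α - A.card)

/-- `F` is an increasing family (up-set). -/
def IncreasingFam [DecidableEq α] (F : Finset (Finset α)) : Prop :=
  ∀ A ∈ F, ∀ B : Finset α, A ⊆ B → B ∈ F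

/-- `F` is non-trivial: not empty and not all of `P(X)`. -/
def NontrivialFam [Fintype α] [DecidableEq α] (F : Finset (Finset α)) : Prop :=
  F ≠ ∅ ∧ F ≠ Finset.univ

/-- The `q`-cost of a family `G`. -/
noncomputable def cost [DecidableEq α] (q : ℝ) (G : Finset (Finset α)) : ℝ :=
  ∑ S ∈ G, q ^ S.card

/-- `G` covers `F`: every member of `F` contains some member of `G`. -/
def Covers [DecidableEq α] (G F : Finset (Finset α)) : Prop :=
  ∀ A ∈ F, ∃ S ∈ G, S ⊆ A

/-- The expectation threshold of `F`. -/
noncomputable def qc [Fintype α] [DecidableEq α] (F : Finset (Finset α)) : ℝ :=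
  sSup {q : ℝ | q ∈ Set.Icc (0 : ℝ) 1 ∧
    ∃ G : Finset (Finset α), Covers G F ∧ cost q G ≤ 1 / 2}

/-- The `k`-cloned family `F_k ⊂ P(X × [k])`. -/
def clone [Fintype α] [DecidableEq α] (k : ℕ) (F : Finset (Finset α)) :
    Finset (Finset (α × Fin k)) :=
  Finset.univ.filter (fun S => S.image Prod.fst ∈ F)

/-- `Ψ(S)`: minimal preimages of `S` under the projection `π : X × [k] → X`. -/
def Psi [Fintype α] [DecidableEq α] (k : ℕ) (S : Finset α) :
    Finset (Finset (α × Fin k)) :=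
  Finset.univ.filter (fun S' => S'.image Prod.fst = S ∧ S'.card = S.card)

/-- `l(F)`: the size of a largest minimal element of `F`. -/
def ell [Fintype α] [DecidableEq α] (F : Finset (Finset α)) : ℕ :=
  (F.filter (fun A => ∀ B ⊂ A, B ∉ F)).sup Finset.card

lemma sum_image_le' {β γ : Type*} [DecidableEq γ] (T : Finset β) (g : β → γ) (h : γ → ℝ)
    (h0 : ∀ c, 0 ≤ h c) : ∑ c ∈ T.image g, h c ≤ ∑ t ∈ T, h (g t) := by
  rw [← Finset.sum_fiberwise_of_maps_to (t := T.image g)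
    (fun t ht => Finset.mem_image_of_mem g ht) (fun t => h (g t))]
  refine Finset.sum_le_sum fun c hc => ?_
  obtain ⟨t, ht, hgt⟩ := Finset.mem_image.mp hc
  have ht' : t ∈ T.filter (fun t => g t = c) := Finset.mem_filter.mpr ⟨ht, hgt⟩
  calc h c = h (g t) := by rw [hgt]
    _ ≤ _ := Finset.single_le_sum (fun i _ => h0 _) ht'

lemma card_Psi_le [Fintype α] [DecidableEq α] {k : ℕ} (hk : 0 < k) (S : Finset α) :
    (Psi k S).card ≤ k ^ S.card := by
  classical
  have : (Psi k S).card ≤ Fintype.card (↥S → Fin k) := by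
    refine Finset.card_le_card_of_injOn
      (fun S' => fun x : ↥S => if h : ∃ i, ((x : α), i) ∈ S' then h.choose else ⟨0, hk⟩)
      (fun _ _ => Finset.mem_coe.mpr (by simp)) ?_
    have main : ∀ T₁ T₂ : Finset (α × Fin k),
        (T₁.image Prod.fst = S ∧ T₁.card = S.card) →
        (T₂.image Prod.fst = S ∧ T₂.card = S.card) →
        (fun x : ↥S => if h : ∃ i, ((x : α), i) ∈ T₁ then h.choose else ⟨0, hk⟩) =
        (fun x : ↥S => if h : ∃ i, ((x : α), i) ∈ T₂ then h.choose else ⟨0, hk⟩) →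
        T₁ ⊆ T₂ := by
      intro T₁ T₂ h₁ h₂ hfeq p hp
      have inj₁ : Set.InjOn Prod.fst (T₁ : Set (α × Fin k)) := by
        rw [← Finset.card_image_iff]; rw [h₁.1, ← h₁.2]
      have hpS : p.1 ∈ S := by rw [← h₁.1]; exact Finset.mem_image_of_mem _ hp
      have hex₁ : ∃ i, (p.1, i) ∈ T₁ := ⟨p.2, by simpa using hp⟩
      have e1 : (if h : ∃ i, (p.1, i) ∈ T₁ then h.choose else ⟨0, hk⟩) = p.2 := by
        rw [dif_pos hex₁]
        have hc := hex₁.choose_spec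
        have := inj₁ (Finset.mem_coe.mpr hc) (Finset.mem_coe.mpr hp) rfl
        exact (Prod.ext_iff.mp this).2
      have e2 : (if h : ∃ i, (p.1, i) ∈ T₂ then h.choose else ⟨0, hk⟩) = p.2 :=
        ((congrFun hfeq ⟨p.1, hpS⟩).symm.trans e1 :)
      have hpS2 : p.1 ∈ T₂.image Prod.fst := by rw [h₂.1]; exact hpS
      obtain ⟨q, hq, hq1⟩ := Finset.mem_image.mp hpS2
      have hex₂ : ∃ i, (p.1, i) ∈ T₂ := ⟨q.2, by rwa [← hq1, Prod.mk.eta]⟩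
      rw [dif_pos hex₂] at e2
      have := hex₂.choose_spec
      rw [e2] at this
      simpa [Prod.mk.eta] using this
    intro S₁ h₁ S₂ h₂ hfeq
    simp only [Psi, Finset.coe_filter, Set.mem_setOf_eq, Finset.mem_univ, true_and] at h₁ h₂
    exact Finset.Subset.antisymm (main S₁ S₂ h₁ h₂ hfeq) (main S₂ S₁ h₂ h₁ hfeq.symm)
  calc (Psi k S).card ≤ Fintype.card (↥S → Fin k) := this
    _ = k ^ S.card := by simp [Fintype.card_fun]

lemma count_graph_le [Fintype α] [DecidableEq α] {k : ℕ} (S' : Finset (α × Fin k))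
    (hinj : Set.InjOn Prod.fst (S' : Set (α × Fin k))) :
    (Finset.univ.filter (fun f : α → Fin k => ∀ p ∈ S', f p.1 = p.2)).card
      ≤ k ^ (Fintype.card α - S'.card) := by
  classical
  set S : Finset α := S'.image Prod.fst with hS
  have hcard : S.card = S'.card := Finset.card_image_iff.mpr hinj
  have h1 : (Finset.univ.filter (fun f : α → Fin k => ∀ p ∈ S', f p.1 = p.2)).card
      ≤ Fintype.card (↥(Sᶜ : Finset α) → Fin k) := by
    refine Finset.card_le_card_of_injOn
      (fun f => fun x : ↥(Sᶜ : Finset α) => f (x : α))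
      (fun _ _ => Finset.mem_coe.mpr (by simp)) ?_
    intro f₁ h₁ f₂ h₂ heq
    simp only [Finset.coe_filter, Set.mem_setOf_eq, Finset.mem_univ, true_and] at h₁ h₂
    funext x
    by_cases hx : x ∈ S
    · obtain ⟨p, hp, hp1⟩ := Finset.mem_image.mp hx
      rw [← hp1, h₁ p hp, h₂ p hp]
    · exact (congrFun heq ⟨x, Finset.mem_compl.mpr hx⟩ :)
  calc _ ≤ Fintype.card (↥(Sᶜ : Finset α) → Fin k) := h1
    _ = k ^ (Fintype.card α - S'.card) := by
        simp [Fintype.card_fun, Finset.card_compl, hcard]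

def QSet [Fintype α] [DecidableEq α] (F : Finset (Finset α)) : Set ℝ :=
  {q : ℝ | q ∈ Set.Icc (0 : ℝ) 1 ∧
    ∃ G : Finset (Finset α), Covers G F ∧ cost q G ≤ 1 / 2}

lemma mem_clone [Fintype α] [DecidableEq α] {k : ℕ} {F : Finset (Finset α)}
    {S : Finset (α × Fin k)} : S ∈ clone k F ↔ S.image Prod.fst ∈ F := by
  simp [clone]

lemma lower_dir [Fintype α] [DecidableEq α] {F : Finset (Finset α)} {k : ℕ} (hk : 0 < k)
    {q : ℝ} (hq : q ∈ QSet F) : q / k ∈ QSet (clone k F) := by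
  classical
  obtain ⟨⟨hq0, hq1⟩, G, hcov, hcost⟩ := hq
  have hk' : (0 : ℝ) < k := by exact_mod_cast hk
  refine ⟨⟨div_nonneg hq0 hk'.le, ?_⟩, G.biUnion (Psi k), ?_, ?_⟩
  · have h1k : (1 : ℝ) ≤ k := by exact_mod_cast hk
    exact div_le_one_of_le₀ (by linarith) hk'.le
  · -- covers
    intro A' hA'
    obtain ⟨S, hS, hsub⟩ := hcov _ (mem_clone.mp hA')
    have hex : ∀ x ∈ S, ∃ i : Fin k, (x, i) ∈ A' := by
      intro x hx
      have : x ∈ A'.image Prod.fst := hsub hx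
      obtain ⟨p, hp, hp1⟩ := Finset.mem_image.mp this
      exact ⟨p.2, by rwa [← hp1, Prod.mk.eta]⟩
    set g : ↥S → α × Fin k := fun x => ((x : α), (hex x x.2).choose) with hg
    refine ⟨S.attach.image g, Finset.mem_biUnion.mpr ⟨S, hS, ?_⟩, ?_⟩
    · simp only [Psi, Finset.mem_filter, Finset.mem_univ, true_and]
      constructor
      · rw [Finset.image_image]
        have : (Prod.fst ∘ g) = fun x : ↥S => (x : α) := rfl
        rw [this, Finset.attach_image_val]
      · rw [Finset.card_image_of_injOn, Finset.card_attach]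
        intro x _ y _ hxy
        exact Subtype.ext (congrArg Prod.fst hxy)
    · intro p hp
      obtain ⟨x, _, hx1⟩ := Finset.mem_image.mp hp
      rw [← hx1]
      exact (hex x x.2).choose_spec
  · -- cost
    have hdisj : (G : Set (Finset α)).PairwiseDisjoint (Psi k) := by
      intro S₁ _ S₂ _ hne
      simp only [Function.onFun]
      rw [Finset.disjoint_left]
      intro T h1 h2
      simp only [Psi, Finset.mem_filter, Finset.mem_univ, true_and] at h1 h2
      exact hne (h1.1 ▸ h2.1)
    rw [cost, Finset.sum_biUnion hdisj]
    calc ∑ S ∈ G, ∑ S' ∈ Psi k S, (q / k) ^ S'.card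
        ≤ ∑ S ∈ G, q ^ S.card := by
          refine Finset.sum_le_sum fun S _ => ?_
          have hc : ∀ S' ∈ Psi k S, (q / k) ^ S'.card = (q / k) ^ S.card := by
            intro S' hS'
            simp only [Psi, Finset.mem_filter, Finset.mem_univ, true_and] at hS'
            rw [hS'.2]
          rw [Finset.sum_congr rfl hc, Finset.sum_const, nsmul_eq_mul]
          calc ((Psi k S).card : ℝ) * (q / k) ^ S.card
              ≤ (k ^ S.card : ℝ) * (q / k) ^ S.card := by
                refine mul_le_mul_of_nonneg_right ?_ (by positivity)
                exact_mod_cast card_Psi_le hk S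
            _ = q ^ S.card := by
                rw [← mul_pow, mul_div_cancel₀ _ hk'.ne']
      _ ≤ 1 / 2 := hcost

lemma upper_dir [Fintype α] [DecidableEq α] {F : Finset (Finset α)} (hne : F ≠ ∅)
    {k : ℕ} (hk : 0 < k) {q : ℝ} (hq : q ∈ QSet (clone k F)) : (k : ℝ) * q ∈ QSet F := by
  classical
  obtain ⟨⟨hq0, hq1⟩, G', hcov, hcost⟩ := hq
  have hk' : (0 : ℝ) < k := by exact_mod_cast hk
  have hkq0 : (0 : ℝ) ≤ (k : ℝ) * q := by positivity
  set Gf : (α → Fin k) → Finset (Finset α) :=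
    fun f => (G'.filter (fun S' => ∀ p ∈ S', f p.1 = p.2)).image (Finset.image Prod.fst)
    with hGf
  -- every Gf f covers F
  have hcovf : ∀ f, Covers (Gf f) F := by
    intro f A hA
    have hAg : A.image (fun x => (x, f x)) ∈ clone k F := by
      rw [mem_clone, Finset.image_image]
      have hid : (Prod.fst ∘ fun x : α => (x, f x)) = id := rfl
      rw [hid, Finset.image_id]
      exact hA
    obtain ⟨S', hS', hsub⟩ := hcov _ hAg
    refine ⟨S'.image Prod.fst, ?_, ?_⟩
    · refine Finset.mem_image_of_mem _ (Finset.mem_filter.mpr ⟨hS', ?_⟩)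
      intro p hp
      obtain ⟨x, _, hx1⟩ := Finset.mem_image.mp (hsub hp)
      rw [← hx1]
    · intro x hx
      obtain ⟨p, hp, hp1⟩ := Finset.mem_image.mp hx
      obtain ⟨y, hy, hy1⟩ := Finset.mem_image.mp (hsub hp)
      rw [← hp1, ← hy1]
      exact hy
  -- some f gives a cheap cover
  have hcheap : ∃ f : α → Fin k, cost ((k : ℝ) * q) (Gf f) ≤ 1 / 2 := by
    by_contra hno
    push_neg at hno
    have key : ∑ f : α → Fin k, cost ((k : ℝ) * q) (Gf f)
        ≤ (k : ℝ) ^ Fintype.card α * cost q G' := by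
      have step1 : ∀ f : α → Fin k, cost ((k : ℝ) * q) (Gf f)
          ≤ ∑ S' ∈ G'.filter (fun S' => ∀ p ∈ S', f p.1 = p.2),
              ((k : ℝ) * q) ^ (S'.image Prod.fst).card := by
        intro f
        exact sum_image_le' (G'.filter (fun S' => ∀ p ∈ S', f p.1 = p.2))
          (Finset.image Prod.fst) (fun c : Finset α => ((k : ℝ) * q) ^ c.card)
          (fun c => by positivity)
      calc ∑ f : α → Fin k, cost ((k : ℝ) * q) (Gf f)
          ≤ ∑ f : α → Fin k, ∑ S' ∈ G'.filter (fun S' => ∀ p ∈ S', f p.1 = p.2),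
              ((k : ℝ) * q) ^ (S'.image Prod.fst).card :=
            Finset.sum_le_sum fun f _ => step1 f
        _ = ∑ S' ∈ G', ((Finset.univ.filter
              (fun f : α → Fin k => ∀ p ∈ S', f p.1 = p.2)).card : ℝ)
              * ((k : ℝ) * q) ^ (S'.image Prod.fst).card := by
            simp_rw [Finset.sum_filter]
            rw [Finset.sum_comm]
            refine Finset.sum_congr rfl fun S' _ => ?_
            rw [← Finset.sum_filter, Finset.sum_const, nsmul_eq_mul]
        _ ≤ ∑ S' ∈ G', (k : ℝ) ^ Fintype.card α * q ^ S'.card := by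
            refine Finset.sum_le_sum fun S' _ => ?_
            by_cases hN : (Finset.univ.filter
                (fun f : α → Fin k => ∀ p ∈ S', f p.1 = p.2)).Nonempty
            · obtain ⟨f₀, hf₀⟩ := hN
              have hf₀' : ∀ p ∈ S', f₀ p.1 = p.2 := (Finset.mem_filter.mp hf₀).2
              have hinj : Set.InjOn Prod.fst (S' : Set (α × Fin k)) := by
                intro p hp r hr hpr
                refine Prod.ext hpr ?_
                rw [← hf₀' p (Finset.mem_coe.mp hp), ← hf₀' r (Finset.mem_coe.mp hr), hpr]
              have hm : (S'.image Prod.fst).card = S'.card :=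
                Finset.card_image_iff.mpr hinj
              have hn_le : S'.card ≤ Fintype.card α := by
                rw [← hm]; exact Finset.card_le_univ _
              have hNle := count_graph_le S' hinj
              rw [hm]
              calc ((Finset.univ.filter
                    (fun f : α → Fin k => ∀ p ∈ S', f p.1 = p.2)).card : ℝ)
                    * ((k : ℝ) * q) ^ S'.card
                  ≤ ((k : ℝ) ^ (Fintype.card α - S'.card)) * ((k : ℝ) * q) ^ S'.card := by
                    refine mul_le_mul_of_nonneg_right ?_ (by positivity)
                    exact_mod_cast hNle
                _ = (k : ℝ) ^ Fintype.card α * q ^ S'.card := by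
                    rw [mul_pow, ← mul_assoc, ← pow_add, Nat.sub_add_cancel hn_le]
            · rw [Finset.not_nonempty_iff_eq_empty] at hN
              rw [hN]
              simp only [Finset.card_empty, Nat.cast_zero, zero_mul]
              positivity
        _ = (k : ℝ) ^ Fintype.card α * cost q G' := by
            rw [cost, Finset.mul_sum]
    have lb : ((k : ℝ) ^ Fintype.card α) * (1 / 2)
        < ∑ f : α → Fin k, cost ((k : ℝ) * q) (Gf f) := by
      have hcard : (Finset.univ : Finset (α → Fin k)).card = k ^ Fintype.card α := by
        rw [Finset.card_univ, Fintype.card_fun, Fintype.card_fin]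
      have := Finset.sum_lt_sum_of_nonempty
        (s := (Finset.univ : Finset (α → Fin k)))
        (f := fun _ => (1 : ℝ) / 2) (g := fun f => cost ((k : ℝ) * q) (Gf f))
        ⟨fun _ => ⟨0, hk⟩, Finset.mem_univ _⟩ (fun f _ => hno f)
      calc ((k : ℝ) ^ Fintype.card α) * (1 / 2)
          = ∑ _f : α → Fin k, (1 : ℝ) / 2 := by
            rw [Finset.sum_const, nsmul_eq_mul, hcard]; push_cast; ring
        _ < _ := this
    have hub : ∑ f : α → Fin k, cost ((k : ℝ) * q) (Gf f)
        ≤ (k : ℝ) ^ Fintype.card α * (1 / 2) :=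
      key.trans (mul_le_mul_of_nonneg_left hcost (by positivity))
    linarith
  obtain ⟨f, hf⟩ := hcheap
  -- k*q ≤ 1
  have hle1 : (k : ℝ) * q ≤ 1 := by
    by_contra hgt
    push_neg at hgt
    obtain ⟨A, hA⟩ := Finset.nonempty_iff_ne_empty.mpr hne
    obtain ⟨S, hS, _⟩ := hcovf f A hA
    have h1 : (1 : ℝ) ≤ ((k : ℝ) * q) ^ S.card := one_le_pow₀ hgt.le
    have h2 : ((k : ℝ) * q) ^ S.card ≤ cost ((k : ℝ) * q) (Gf f) := by
      rw [cost]
      exact Finset.single_le_sum (f := fun T : Finset α => ((k : ℝ) * q) ^ T.card)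
        (fun T _ => by positivity) hS
    linarith
  exact ⟨⟨hkq0, hle1⟩, Gf f, hcovf f, hf⟩


lemma zero_mem_QSet [Fintype α] [DecidableEq α] {F : Finset (Finset α)} (h : ∅ ∉ F) :
    (0 : ℝ) ∈ QSet F := by
  refine ⟨⟨le_refl 0, zero_le_one⟩, F, fun A hA => ⟨A, hA, Finset.Subset.refl A⟩, ?_⟩
  rw [cost]
  have : ∀ A ∈ F, (0 : ℝ) ^ A.card = 0 := by
    intro A hA
    have : A ≠ ∅ := fun hA0 => h (hA0 ▸ hA)
    have : 0 < A.card := Finset.card_pos.mpr (Finset.nonempty_iff_ne_empty.mpr this)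
    exact zero_pow this.ne'
  rw [Finset.sum_congr rfl this, Finset.sum_const, smul_zero]
  norm_num

theorem stmt11 [Fintype α] [DecidableEq α] (F : Finset (Finset α))
    (hinc : IncreasingFam F) (hnt : NontrivialFam F) (k : ℕ) (hk : 0 < k) :
    qc (clone k F) = qc F / k := by
  classical
  have hk' : (0 : ℝ) < k := by exact_mod_cast hk
  have h0F : ∅ ∉ F := fun h =>
    hnt.2 (Finset.eq_univ_iff_forall.mpr fun B => hinc ∅ h B (Finset.empty_subset B))
  have h0C : ∅ ∉ clone k F := fun h => h0F (by simpa using mem_clone.mp h)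
  have hB0 : (0 : ℝ) ∈ QSet F := zero_mem_QSet h0F
  have hA0 : (0 : ℝ) ∈ QSet (clone k F) := zero_mem_QSet h0C
  have bddB : BddAbove (QSet F) := ⟨1, fun q hq => hq.1.2⟩
  have bddA : BddAbove (QSet (clone k F)) := ⟨1, fun q hq => hq.1.2⟩
  have hqcF : qc F = sSup (QSet F) := rfl
  have hqcC : qc (clone k F) = sSup (QSet (clone k F)) := rfl
  rw [hqcF, hqcC]
  apply le_antisymm
  · refine csSup_le ⟨0, hA0⟩ fun a ha => ?_
    have h1 : (k : ℝ) * a ∈ QSet F := upper_dir hnt.1 hk ha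
    have h2 := le_csSup bddB h1
    rw [le_div_iff₀ hk']
    linarith
  · rw [div_le_iff₀ hk']
    refine csSup_le ⟨0, hB0⟩ fun b hb => ?_
    have h1 : b / k ∈ QSet (clone k F) := lower_dir hk hb
    have h2 := le_csSup bddA h1
    calc b = (b / k) * k := by field_simp
      _ ≤ sSup (QSet (clone k F)) * k := mul_le_mul_of_nonneg_right h2 hk'.le
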